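/- arXiv:2601.01120 — 4 statements merged into one kernel-verified Lean document; each statement's English description precedes it below -/
import Mathlib

section
/- A finite simple graph G is P₄-free if and only if every connected component of G with at least two vertices is isomorphic to the join of two (nonempty) P₄-free graphs. -/
open SimpleGraph

/-- The join of two graphs on disjoint vertex sets: disjoint union plus all cross edges. -/
def gJoin {α β : Type*} (G : SimpleGraph α) (H : SimpleGraph β) : SimpleGraph (α ⊕ β) where
  Adj x y := match x, y with
    | Sum.inl a, Sum.inl b => G.Adj a b
    | Sum.inr a, Sum.inr b => H.Adj a b
    | Sum.inl _, Sum.inr _ => True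
    | Sum.inr _, Sum.inl _ => True
  symm := ⟨by rintro (a|a) (b|b) h <;> first | exact h.symm | trivial⟩
  loopless := ⟨by rintro (a|a) h; exacts [G.irrefl h, H.irrefl h]⟩

/-- A graph is `P₄`-free if it has no induced subgraph isomorphic to the path on 4 vertices. -/
def P4Free {V : Type*} (G : SimpleGraph V) : Prop :=
  IsEmpty (SimpleGraph.pathGraph 4 ↪g G)

/-- `T` is a connected dominating set of `G`. -/
def IsConnDomSet {V : Type*} (G : SimpleGraph V) (T : Set V) : Prop :=
  T.Nonempty ∧ (G.induce T).Connected ∧ ∀ u ∉ T, ∃ t ∈ T, G.Adj u t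

/-- `T` is a minimum connected dominating set of `G`. -/
def IsMinConnDomSet {V : Type*} (G : SimpleGraph V) (T : Set V) : Prop :=
  IsConnDomSet G T ∧ ∀ T' : Set V, IsConnDomSet G T' → T.ncard ≤ T'.ncard

/-- The graph `K₁ ⊔ K₂`: three vertices, exactly one edge (between 0 and 1). -/
def graphK1K2 : SimpleGraph (Fin 3) := SimpleGraph.fromRel (fun a b => a = 0 ∧ b = 1)

/-- The star `K_{1,3}`: vertex 0 adjacent to 1, 2, 3. -/
def graphK13 : SimpleGraph (Fin 4) := SimpleGraph.fromRel (fun a _ => a = 0)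

/-- The graph `B = K₁ * (K₁ ⊔ K₂)`: vertex 0 adjacent to all, plus the edge 2-3. -/
def graphB : SimpleGraph (Fin 4) := SimpleGraph.fromRel (fun a b => a = 0 ∨ (a = 2 ∧ b = 3))

def hasP4 {V : Type*} (G : SimpleGraph V) : Prop :=
  ∃ a b c d : V, G.Adj a b ∧ G.Adj b c ∧ G.Adj c d ∧
    ¬G.Adj a c ∧ ¬G.Adj a d ∧ ¬G.Adj b d ∧ a ≠ c ∧ a ≠ d ∧ b ≠ d

lemma p4free_iff {V : Type*} (G : SimpleGraph V) : P4Free G ↔ ¬ hasP4 G := by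
  constructor
  · rintro ⟨h⟩ ⟨a, b, c, d, hab, hbc, hcd, hac, had, hbd, nac, nad, nbd⟩
    have nab := hab.ne
    have nbc := hbc.ne
    have ncd := hcd.ne
    have nba := nab.symm; have ncb := nbc.symm; have ndc := ncd.symm
    have nca := nac.symm; have nda := nad.symm; have ndb := nbd.symm
    refine h ⟨⟨![a,b,c,d], ?_⟩, ?_⟩
    · intro i j hij
      fin_cases i <;> fin_cases j <;>
        simp only [Matrix.cons_val_zero, Matrix.cons_val_one, Matrix.head_cons,
          Matrix.cons_val_two, Matrix.tail_cons, Matrix.cons_val_three,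
          Matrix.cons_val_fin_one] at hij <;>
        first | rfl | exact absurd hij (by assumption)
    · intro i j
      fin_cases i <;> fin_cases j <;>
        simp only [Matrix.cons_val_zero, Matrix.cons_val_one, Matrix.head_cons,
          Matrix.cons_val_two, Matrix.tail_cons, Matrix.cons_val_three,
          Matrix.cons_val_fin_one] <;>
        first
        | exact iff_of_false (G.irrefl) (by rw [pathGraph_adj]; decide)
        | exact iff_of_true hab (by rw [pathGraph_adj]; decide)
        | exact iff_of_true hab.symm (by rw [pathGraph_adj]; decide)
        | exact iff_of_true hbc (by rw [pathGraph_adj]; decide)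
        | exact iff_of_true hbc.symm (by rw [pathGraph_adj]; decide)
        | exact iff_of_true hcd (by rw [pathGraph_adj]; decide)
        | exact iff_of_true hcd.symm (by rw [pathGraph_adj]; decide)
        | exact iff_of_false hac (by rw [pathGraph_adj]; decide)
        | exact iff_of_false (fun h' => hac h'.symm) (by rw [pathGraph_adj]; decide)
        | exact iff_of_false had (by rw [pathGraph_adj]; decide)
        | exact iff_of_false (fun h' => had h'.symm) (by rw [pathGraph_adj]; decide)
        | exact iff_of_false hbd (by rw [pathGraph_adj]; decide)
        | exact iff_of_false (fun h' => hbd h'.symm) (by rw [pathGraph_adj]; decide)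
  · intro h
    refine ⟨fun e => h ?_⟩
    refine ⟨e 0, e 1, e 2, e 3,
      e.map_rel_iff.2 (by rw [pathGraph_adj]; decide),
      e.map_rel_iff.2 (by rw [pathGraph_adj]; decide),
      e.map_rel_iff.2 (by rw [pathGraph_adj]; decide),
      fun hc => absurd (e.map_rel_iff.1 hc) (by rw [pathGraph_adj]; decide),
      fun hc => absurd (e.map_rel_iff.1 hc) (by rw [pathGraph_adj]; decide),
      fun hc => absurd (e.map_rel_iff.1 hc) (by rw [pathGraph_adj]; decide),
      fun hc => absurd (e.injective hc) (by decide),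
      fun hc => absurd (e.injective hc) (by decide),
      fun hc => absurd (e.injective hc) (by decide)⟩

lemma p4free_mono {V W : Type*} {G : SimpleGraph V} {H : SimpleGraph W}
    (f : G ↪g H) (h : P4Free H) : P4Free G :=
  ⟨fun e => h.false (e.trans f)⟩

lemma hasP4_of_embedding {V W : Type*} {G : SimpleGraph V} {H : SimpleGraph W}
    (f : G ↪g H) (h : hasP4 G) : hasP4 H := by
  obtain ⟨a, b, c, d, hab, hbc, hcd, hac, had, hbd, nac, nad, nbd⟩ := h
  exact ⟨f a, f b, f c, f d, f.map_rel_iff.2 hab, f.map_rel_iff.2 hbc, f.map_rel_iff.2 hcd,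
    fun h' => hac (f.map_rel_iff.1 h'), fun h' => had (f.map_rel_iff.1 h'),
    fun h' => hbd (f.map_rel_iff.1 h'),
    fun h' => nac (f.injective h'), fun h' => nad (f.injective h'),
    fun h' => nbd (f.injective h')⟩

lemma hasP4_compl {V : Type*} {G : SimpleGraph V} (h : hasP4 Gᶜ) : hasP4 G := by
  obtain ⟨a, b, c, d, hab, hbc, hcd, hac, had, hbd, nac, nad, nbd⟩ := h
  rw [compl_adj] at hab hbc hcd
  have Hac : G.Adj a c := by by_contra hh; exact hac (compl_adj G a c |>.2 ⟨nac, hh⟩)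
  have Had : G.Adj a d := by by_contra hh; exact had (compl_adj G a d |>.2 ⟨nad, hh⟩)
  have Hbd : G.Adj b d := by by_contra hh; exact hbd (compl_adj G b d |>.2 ⟨nbd, hh⟩)
  exact ⟨b, d, a, c, Hbd, Had.symm, Hac,
    fun h' => hab.2 h'.symm, fun h' => hbc.2 h', fun h' => hcd.2 h'.symm,
    fun h' => hab.1 h'.symm, fun h' => hbc.1 h', fun h' => hcd.1 h'.symm⟩

lemma adj_of_reachable_ne {V : Type*} {G : SimpleGraph V} {u v : V}
    (h : G.Reachable u v) (hne : u ≠ v) : ∃ w, G.Adj u w := by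
  obtain ⟨p⟩ := h
  cases p with
  | nil => exact absurd rfl hne
  | cons h q => exact ⟨_, h⟩

lemma claim1 {V : Type*} {G : SimpleGraph V} {v : V} :
    ∀ {x : V} (_ : G.Walk x v) (hx : x ≠ v),
    ∃ w, ∃ hw : w ≠ v, (G.induce {u | u ≠ v}).Reachable ⟨x, hx⟩ ⟨w, hw⟩ ∧ G.Adj w v := by
  intro x p
  induction p with
  | nil => exact fun hx => absurd rfl hx
  | @cons x z v h q ih =>
    intro hx
    by_cases hz : z = v
    · exact ⟨x, hx, Reachable.refl _, hz ▸ h⟩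
    · obtain ⟨w, hw, hr, hadj⟩ := ih hz
      have : (G.induce {u | u ≠ v}).Adj ⟨x, hx⟩ ⟨z, hz⟩ := h
      exact ⟨w, hw, this.reachable.trans hr, hadj⟩

lemma claim2 {V : Type*} {G : SimpleGraph V} {v : V} :
    ∀ {x w : ↥{u | u ≠ v}} (_ : (G.induce {u | u ≠ v}).Walk x w)
      (_ : ¬G.Adj ↑x v) (_ : G.Adj ↑w v),
    ∃ p q : ↥{u | u ≠ v}, (G.induce {u | u ≠ v}).Adj p q ∧
      (G.induce {u | u ≠ v}).Reachable x p ∧ (G.induce {u | u ≠ v}).Reachable x q ∧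
      ¬G.Adj ↑p v ∧ G.Adj ↑q v := by
  intro x w pw
  induction pw with
  | nil => exact fun hx hw => absurd hw hx
  | @cons x z w h q ih =>
    intro hx hw
    by_cases hz : G.Adj ↑z v
    · exact ⟨x, z, h, Reachable.refl _, h.reachable, hx, hz⟩
    · obtain ⟨p, q', hadj, hr1, hr2, hp, hq⟩ := ih hz hw
      exact ⟨p, q', hadj, h.reachable.trans hr1, h.reachable.trans hr2, hp, hq⟩

lemma step {V : Type*} {G : SimpleGraph V} (hG : G.Connected) (hGc : Gᶜ.Connected) (v : V)
    (hH : ¬ (G.induce {u | u ≠ v}).Preconnected) : hasP4 G := by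
  rw [Preconnected] at hH
  push_neg at hH
  obtain ⟨x, y, hxy⟩ := hH
  -- v has a non-neighbor u
  obtain ⟨u, hadj⟩ := adj_of_reachable_ne (hGc.preconnected v x.val) (Ne.symm x.prop)
  have hu : u ≠ v := hadj.ne'
  have hnuv : ¬G.Adj u v := fun h' => (compl_adj G v u).1 hadj |>.2 h'.symm
  -- z not reachable from u in H
  obtain ⟨z, hz⟩ : ∃ z : ↥{u | u ≠ v}, ¬(G.induce {u | u ≠ v}).Reachable ⟨u, hu⟩ z := by
    by_cases hr : (G.induce {u | u ≠ v}).Reachable ⟨u, hu⟩ x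
    · exact ⟨y, fun h' => hxy (hr.symm.trans h')⟩
    · exact ⟨x, hr⟩
  -- frontier pair p q in u's component
  obtain ⟨w, hw, hruw, hwv⟩ := claim1 (hG.preconnected u v).some hu
  obtain ⟨pw⟩ := hruw
  obtain ⟨p, q, hadjpq, hrp, hrq, hpv, hqv⟩ := claim2 pw hnuv hwv
  -- vertex t adjacent to v in z's component
  obtain ⟨t, ht, hrzt, htv⟩ := claim1 (hG.preconnected z.val v).some z.prop
  -- non-adjacencies across components
  have hpt : ¬G.Adj ↑p t := by
    intro h'
    have : (G.induce {u | u ≠ v}).Adj p ⟨t, ht⟩ := h'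
    exact hz ((hrp.trans this.reachable).trans hrzt.symm)
  have hqt : ¬G.Adj ↑q t := by
    intro h'
    have : (G.induce {u | u ≠ v}).Adj q ⟨t, ht⟩ := h'
    exact hz ((hrq.trans this.reachable).trans hrzt.symm)
  have hptne : (p : V) ≠ t := by
    intro h'
    have : p = (⟨t, ht⟩ : ↥{u | u ≠ v}) := Subtype.ext h'
    exact hz (hrp.trans (this ▸ hrzt.symm))
  have hqtne : (q : V) ≠ t := by
    intro h'
    have : q = (⟨t, ht⟩ : ↥{u | u ≠ v}) := Subtype.ext h'
    exact hz (hrq.trans (this ▸ hrzt.symm))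
  exact ⟨↑p, ↑q, v, t, hadjpq, hqv, htv.symm, hpv, hpt, hqt, p.prop, hptne, hqtne⟩

lemma compl_induce {V : Type*} (G : SimpleGraph V) (s : Set V) :
    (G.induce s)ᶜ = Gᶜ.induce s := by
  ext a b
  constructor
  · intro h
    rw [compl_adj] at h
    exact ⟨Subtype.coe_ne_coe.2 h.1, h.2⟩
  · intro h
    rw [compl_adj]
    exact ⟨Subtype.coe_ne_coe.1 h.1, h.2⟩

lemma adj_of_card_two {V : Type} [Fintype V] {G : SimpleGraph V} (hc : Fintype.card V = 2)
    {a b : V} (h : G.Reachable a b) (hne : a ≠ b) : G.Adj a b := by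
  obtain ⟨p⟩ := h
  cases p with
  | nil => exact absurd rfl hne
  | @cons a z b h q =>
    by_cases hz : z = b
    · exact hz ▸ h
    · exfalso
      have hnd : ([a, z, b] : List V).Nodup := by
        simp [h.ne, hne, hz]
      have h3 : (3:ℕ) ≤ Fintype.card V := by simpa using hnd.length_le_card
      omega

lemma key : ∀ (n : ℕ) (V : Type) [Fintype V] (G : SimpleGraph V),
    Fintype.card V = n → 2 ≤ n → G.Connected → Gᶜ.Connected → hasP4 G := by
  intro n
  induction n using Nat.strong_induction_on with
  | _ n ih =>
  intro V _ G hcard hn hG hGc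
  classical
  rcases eq_or_lt_of_le hn with h2 | h3
  · exfalso
    obtain ⟨a, b, hab⟩ := Fintype.exists_pair_of_one_lt_card (α := V) (by omega)
    have hV2 : Fintype.card V = 2 := by omega
    have h1 : G.Adj a b := adj_of_card_two hV2 (hG.preconnected a b) hab
    have h2 : Gᶜ.Adj a b := adj_of_card_two hV2 (hGc.preconnected a b) hab
    exact ((compl_adj G a b).1 h2).2 h1
  · have hne : Nonempty V := hG.nonempty
    obtain ⟨v⟩ := hne
    set s : Set V := {u | u ≠ v} with hs
    have hcards : Fintype.card ↥s = n - 1 := by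
      have h1 : Fintype.card ↥s = Fintype.card {u : V // ¬ u = v} :=
        Fintype.card_congr (Equiv.refl _)
      have h2 : Fintype.card {u : V // ¬ u = v} = Fintype.card V - 1 := by
        rw [Fintype.card_subtype_compl, Fintype.card_subtype_eq]
      omega
    by_cases hp : hasP4 (G.induce s)
    · exact hasP4_of_embedding (Embedding.induce s) hp
    · have hnc : ¬ (G.induce s).Connected ∨ ¬ ((G.induce s)ᶜ).Connected := by
        by_contra hcc
        push_neg at hcc
        exact hp (ih (n-1) (by omega) ↥s (G.induce s) hcards (by omega) hcc.1 hcc.2)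
      have hnes : Nonempty ↥s := by
        rw [← Fintype.card_pos_iff]
        omega
      rcases hnc with hnc | hnc
      · have hpre : ¬ (G.induce s).Preconnected := by
          intro hpc
          exact hnc ⟨hpc⟩
        exact step hG hGc v hpre
      · rw [compl_induce] at hnc
        have hpre : ¬ (Gᶜ.induce s).Preconnected := by
          intro hpc
          exact hnc ⟨hpc⟩
        have hGcc : Gᶜᶜ.Connected := by rw [compl_compl]; exact hG
        exact hasP4_compl (step hGc hGcc v hpre)

lemma supp_induce_connected {V : Type*} {G : SimpleGraph V} (c : G.ConnectedComponent)
    (hne : c.supp.Nonempty) : (G.induce c.supp).Connected := by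
  classical
  rw [connected_iff]
  refine ⟨?_, Set.nonempty_coe_sort.2 hne⟩
  rintro ⟨x, hx⟩ ⟨y, hy⟩
  have hr : G.Reachable x y := by
    rw [ConnectedComponent.mem_supp_iff] at hx hy
    exact ConnectedComponent.exact (hx.trans hy.symm)
  obtain ⟨p⟩ := hr
  have hsub : {v | v ∈ p.support} ≤ c.supp := by
    intro z hz
    have : G.Reachable x z := ⟨p.takeUntil z hz⟩
    rw [ConnectedComponent.mem_supp_iff] at hx ⊢
    rw [← ConnectedComponent.sound this]
    exact hx
  have hconn := p.connected_induce_support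
  have hreach := hconn.preconnected ⟨x, p.start_mem_support⟩ ⟨y, p.end_mem_support⟩
  have := hreach.map (G.induceHomOfLE hsub).toHom
  exact this

lemma hasP4_gJoin {α β : Type*} {H₁ : SimpleGraph α} {H₂ : SimpleGraph β}
    (h : hasP4 (gJoin H₁ H₂)) : hasP4 H₁ ∨ hasP4 H₂ := by
  obtain ⟨a, b, c, d, hab, hbc, hcd, hac, had, hbd, nac, nad, nbd⟩ := h
  rcases a with a|a <;> rcases b with b|b <;> rcases c with c|c <;> rcases d with d|d <;>
    first
    | exact absurd trivial hac
    | exact absurd trivial had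
    | exact absurd trivial hbd
    | exact Or.inl ⟨a, b, c, d, hab, hbc, hcd, hac, had, hbd,
        fun h' => nac (by rw [h']), fun h' => nad (by rw [h']), fun h' => nbd (by rw [h'])⟩
    | exact Or.inr ⟨a, b, c, d, hab, hbc, hcd, hac, had, hbd,
        fun h' => nac (by rw [h']), fun h' => nad (by rw [h']), fun h' => nbd (by rw [h'])⟩


/-- A finite graph is P₄-free iff each connected component with at least two vertices is
isomorphic to the join of two nonempty P₄-free graphs. -/
theorem stmt1 {V : Type} [Fintype V] (G : SimpleGraph V) :
    P4Free G ↔ ∀ c : G.ConnectedComponent, c.supp.Nontrivial →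
      ∃ (α β : Type) (H₁ : SimpleGraph α) (H₂ : SimpleGraph β),
        Nonempty α ∧ Nonempty β ∧ P4Free H₁ ∧ P4Free H₂ ∧
        Nonempty (G.induce c.supp ≃g gJoin H₁ H₂) := by
  classical
  rw [p4free_iff]
  constructor
  · intro hfree c hc
    have hne : c.supp.Nonempty := hc.nonempty
    have hnecoe : Nonempty ↥c.supp := Set.nonempty_coe_sort.2 hne
    have hconn := supp_induce_connected c hne
    have hfree' : ¬ hasP4 (G.induce c.supp) :=
      fun h => hfree (hasP4_of_embedding (Embedding.induce _) h)
    have hnepre : ¬ ((G.induce c.supp)ᶜ).Preconnected := by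
      intro hpc
      apply hfree'
      refine key (Fintype.card ↥c.supp) ↥c.supp (G.induce c.supp) rfl ?_ hconn
        (connected_iff _ |>.2 ⟨hpc, hnecoe⟩)
      exact Fintype.one_lt_card_iff_nontrivial.2 (Set.nontrivial_coe_sort.2 hc)
    rw [Preconnected] at hnepre; push_neg at hnepre
    obtain ⟨x, y, hxy⟩ := hnepre
    set A : Set ↥c.supp := {z | ((G.induce c.supp)ᶜ).Reachable x z} with hA
    have hxA : x ∈ A := Reachable.refl x
    have hyA : y ∉ A := hxy
    have hcross : ∀ a : ↥c.supp, a ∈ A → ∀ b : ↥c.supp, b ∉ A →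
        (G.induce c.supp).Adj a b := by
      intro a ha b hb
      by_contra hnadj
      have hne' : a ≠ b := fun h => hb (h ▸ ha)
      have hcadj : ((G.induce c.supp)ᶜ).Adj a b := (compl_adj _ _ _).2 ⟨hne', hnadj⟩
      exact hb (ha.trans hcadj.reachable)
    refine ⟨↥A, ↥(Aᶜ), (G.induce c.supp).induce A, (G.induce c.supp).induce Aᶜ,
      ⟨⟨x, hxA⟩⟩, ⟨⟨y, hyA⟩⟩, ?_, ?_, ⟨?_⟩⟩
    · rw [p4free_iff]
      exact fun h => hfree' (hasP4_of_embedding (Embedding.induce _) h)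
    · rw [p4free_iff]
      exact fun h => hfree' (hasP4_of_embedding (Embedding.induce _) h)
    · refine RelIso.symm ⟨Equiv.sumCompl (· ∈ A), ?_⟩
      rintro (a|a) (b|b)
      · exact Iff.rfl
      · exact iff_of_true (hcross a a.prop b b.prop) trivial
      · exact iff_of_true ((hcross b b.prop a a.prop).symm) trivial
      · exact Iff.rfl
  · rintro h ⟨a, b, c, d, hab, hbc, hcd, hac, had, hbd, nac, nad, nbd⟩
    set comp := G.connectedComponentMk a with hcomp
    have ha : a ∈ comp.supp := rfl
    have hb : b ∈ comp.supp := (ConnectedComponent.sound hab.reachable).symm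
    have hc : c ∈ comp.supp := by
      rw [ConnectedComponent.mem_supp_iff, ← ConnectedComponent.sound hbc.reachable]
      exact hb
    have hd : d ∈ comp.supp := by
      rw [ConnectedComponent.mem_supp_iff, ← ConnectedComponent.sound hcd.reachable]
      exact hc
    obtain ⟨α, β, H₁, H₂, _, _, hf1, hf2, ⟨iso⟩⟩ := h comp ⟨a, ha, b, hb, hab.ne⟩
    have hind : hasP4 (G.induce comp.supp) :=
      ⟨⟨a, ha⟩, ⟨b, hb⟩, ⟨c, hc⟩, ⟨d, hd⟩, hab, hbc, hcd, hac, had, hbd,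
        fun h' => nac (congrArg Subtype.val h'),
        fun h' => nad (congrArg Subtype.val h'),
        fun h' => nbd (congrArg Subtype.val h')⟩
    have := hasP4_of_embedding iso.toEmbedding hind
    rcases hasP4_gJoin this with hh | hh
    · exact (p4free_iff H₁).1 hf1 hh
    · exact (p4free_iff H₂).1 hf2 hh
end

section
/- Let G be a connected P₄-free graph with dominating edge {v,w}, and with A = N(v) \ N[w], B = N(w) \ N[v], C = N(v) ∩ N(w). Define C₁ = {x ∈ C : A ⊆ N(x), B ⊄ N(x)}, C₂ = {x ∈ C : A ⊄ N(x), B ⊆ N(x)}, and C₃ = {x ∈ C : A ⊆ N(x), B ⊆ N(x)}. Then every vertex in C₁ is adjacent to every vertex in C₂, every vertex in C₁ is adjacent to every vertex in C₃, and every vertex in C₂ is adjacent to every vertex in C₃. -/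
open SimpleGraph

lemma p4aux {V : Type*} (G : SimpleGraph V) (h4 : P4Free G) {a b c d : V}
    (hab : G.Adj a b) (hbc : G.Adj b c) (hcd : G.Adj c d)
    (hac : ¬G.Adj a c) (hbd : ¬G.Adj b d) (had : ¬G.Adj a d) : False := by
  have hba : b ≠ a := hab.symm.ne
  have hca : c ≠ a := fun h => had (h ▸ hcd)
  have hda : d ≠ a := fun h => hac (h ▸ hcd.symm)
  have hcb : c ≠ b := hbc.symm.ne
  have hdb : d ≠ b := fun h => had (h ▸ hab)
  have hdc : d ≠ c := hcd.symm.ne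
  have hca' : ¬G.Adj c a := fun h => hac h.symm
  have hdb' : ¬G.Adj d b := fun h => hbd h.symm
  have hda' : ¬G.Adj d a := fun h => had h.symm
  refine h4.elim ⟨⟨![a,b,c,d], ?_⟩, ?_⟩
  · intro i j hij
    fin_cases i <;> fin_cases j <;> simp_all <;> decide
  · intro i j
    fin_cases i <;> fin_cases j <;>
      simp [SimpleGraph.pathGraph_adj, hab, hbc, hcd, hac, hbd, had,
        hab.symm, hbc.symm, hcd.symm, hca', hdb', hda', G.loopless, Function.Embedding.coeFn_mk] <;> simp_all [DFunLike.coe, adj_comm]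

/-- In a connected P₄-free graph with dominating edge {v,w}, with C₁, C₂, C₃ the common
neighbors dominating A only, B only, or both, all vertices across distinct Cᵢ, Cⱼ are
adjacent. -/
theorem stmt4 {V : Type} [Fintype V] (G : SimpleGraph V) (hc : G.Connected)
    (h4 : P4Free G) (v w : V) (hvw : G.Adj v w)
    (hdom : ∀ u, u ≠ v → u ≠ w → G.Adj u v ∨ G.Adj u w)
    (A B C C₁ C₂ C₃ : Set V)
    (hA : A = G.neighborSet v \ (G.neighborSet w ∪ {w}))
    (hB : B = G.neighborSet w \ (G.neighborSet v ∪ {v}))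
    (hC : C = G.neighborSet v ∩ G.neighborSet w)
    (hC₁ : C₁ = {x ∈ C | A ⊆ G.neighborSet x ∧ ¬ B ⊆ G.neighborSet x})
    (hC₂ : C₂ = {x ∈ C | ¬ A ⊆ G.neighborSet x ∧ B ⊆ G.neighborSet x})
    (hC₃ : C₃ = {x ∈ C | A ⊆ G.neighborSet x ∧ B ⊆ G.neighborSet x}) :
    (∀ x ∈ C₁, ∀ y ∈ C₂, G.Adj x y) ∧
    (∀ x ∈ C₁, ∀ y ∈ C₃, G.Adj x y) ∧
    (∀ x ∈ C₂, ∀ y ∈ C₃, G.Adj x y) := by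
  subst hA hB hC hC₁ hC₂ hC₃
  refine ⟨?_, ?_, ?_⟩
  · rintro x ⟨⟨hxv, hxw⟩, hxA, hxB⟩ y ⟨⟨hyv, hyw⟩, hyA, hyB⟩
    simp only [SimpleGraph.mem_neighborSet] at hxv hxw hyv hyw
    by_contra hxy
    obtain ⟨b, hbB, hxb⟩ := Set.not_subset.1 hxB
    obtain ⟨a, haA, hya⟩ := Set.not_subset.1 hyA
    have haw : ¬G.Adj a w := fun h => haA.2 (Or.inl h.symm)
    have hbw : G.Adj w b := hbB.1
    have hxa : G.Adj x a := hxA haA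
    have hyb : G.Adj y b := hyB hbB
    by_cases hab : G.Adj a b
    · -- induced path x - a - b - y
      exact p4aux G h4 hxa hab hyb.symm hxb (fun h => hya h.symm) hxy
    · -- induced path a - x - w - b
      exact p4aux G h4 hxa.symm hxw.symm hbw haw hxb hab
  · rintro x ⟨⟨hxv, hxw⟩, hxA, hxB⟩ y ⟨⟨hyv, hyw⟩, hyA, hyB⟩
    simp only [SimpleGraph.mem_neighborSet] at hxv hxw hyv hyw
    by_contra hxy
    obtain ⟨b, hbB, hxb⟩ := Set.not_subset.1 hxB
    have hbv : ¬G.Adj b v := fun h => hbB.2 (Or.inl h.symm)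
    have hyb : G.Adj y b := hyB hbB
    -- induced path b - y - v - x
    exact p4aux G h4 hyb.symm hyv.symm hxv hbv (fun h => hxy h.symm)
      (fun h => hxb h.symm)
  · rintro x ⟨⟨hxv, hxw⟩, hxA, hxB⟩ y ⟨⟨hyv, hyw⟩, hyA, hyB⟩
    simp only [SimpleGraph.mem_neighborSet] at hxv hxw hyv hyw
    by_contra hxy
    obtain ⟨a, haA, hxa⟩ := Set.not_subset.1 hxA
    have haw : ¬G.Adj a w := fun h => haA.2 (Or.inl h.symm)
    have hya : G.Adj y a := hyA haA
    -- induced path a - y - w - x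
    exact p4aux G h4 hya.symm hyw.symm hxw haw (fun h => hxy h.symm)
      (fun h => hxa h.symm)
end

section
/- Let G be a connected P₄-free graph with at least two vertices. Then the vertex set of G can be partitioned into two nonempty sets V₁ and V₂ such that every vertex of V₁ is adjacent to every vertex of V₂ (i.e., G is a join of two induced subgraphs). -/
open SimpleGraph

lemma p4free_elim {V : Type*} {G : SimpleGraph V} (h : P4Free G)
    {a b c d : V} (hab : G.Adj a b) (hbc : G.Adj b c) (hcd : G.Adj c d)
    (hac : ¬G.Adj a c) (had : ¬G.Adj a d) (hbd : ¬G.Adj b d)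
    (nac : a ≠ c) (nad : a ≠ d) (nbd : b ≠ d) : False := by
  have nab := hab.ne
  have nbc := hbc.ne
  have ncd := hcd.ne
  have hca : ¬G.Adj c a := fun h' => hac h'.symm
  have hda : ¬G.Adj d a := fun h' => had h'.symm
  have hdb : ¬G.Adj d b := fun h' => hbd h'.symm
  refine h.false (⟨⟨![a,b,c,d], ?_⟩, ?_⟩ : SimpleGraph.pathGraph 4 ↪g G)
  · intro i j hij
    fin_cases i <;> fin_cases j <;>
      first
        | rfl
        | (exfalso; revert hij; simp_all [Ne, eq_comm])
  · intro i j
    fin_cases i <;> fin_cases j <;>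
      simp [pathGraph_adj, hab, hbc, hcd, hac, had, hbd, hab.symm, hbc.symm, hcd.symm,
        hca, hda, hdb, G.irrefl] <;>
        first | exact hab | exact hac | exact had | exact hab.symm | exact hbc | exact hbd | exact hca | exact hbc.symm | exact hcd | exact hda | exact hdb | exact hcd.symm

/-- Reachability within a set `s`: all vertices of the walk (incl. endpoints of each edge) lie in `s`. -/
def ReachIn {V : Type*} (G : SimpleGraph V) (s : Set V) : V → V → Prop :=
  Relation.ReflTransGen (fun x y => x ∈ s ∧ y ∈ s ∧ G.Adj x y)

lemma ReachIn.symm {V : Type*} {G : SimpleGraph V} {s : Set V} {x y : V}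
    (h : ReachIn G s x y) : ReachIn G s y x :=
  by
    unfold ReachIn at *
    induction h with
    | refl => exact Relation.ReflTransGen.refl
    | tail _ hb ih => exact Relation.ReflTransGen.head ⟨hb.2.1, hb.1, hb.2.2.symm⟩ ih

lemma ReachIn.trans' {V : Type*} {G : SimpleGraph V} {s : Set V} {x y z : V}
    (h : ReachIn G s x y) (h' : ReachIn G s y z) : ReachIn G s x z :=
  Relation.ReflTransGen.trans h h'

lemma reach_stay {V : Type*} {G : SimpleGraph V} {s A B : Set V}
    (hsub : ∀ z ∈ s, z ∈ A ∨ z ∈ B)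
    (hcross : ∀ x ∈ A, ∀ y ∈ B, ¬G.Adj x y) {x y : V}
    (h : ReachIn G s x y) (hx : x ∈ A) : y ∈ A := by
  induction h with
  | refl => exact hx
  | tail _ hedge ih =>
    rcases hsub _ hedge.2.1 with h' | h'
    · exact h'
    · exact absurd hedge.2.2 (hcross _ ih _ h')

def DiscOn {V : Type*} (G : SimpleGraph V) (s : Set V) : Prop :=
  ∃ t₁ t₂ : Set V, t₁.Nonempty ∧ t₂.Nonempty ∧ t₁ ∩ t₂ = ∅ ∧ t₁ ∪ t₂ = s ∧
    ∀ x ∈ t₁, ∀ y ∈ t₂, ¬G.Adj x y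

def JoinOn {V : Type*} (G : SimpleGraph V) (s : Set V) : Prop :=
  ∃ t₁ t₂ : Set V, t₁.Nonempty ∧ t₂.Nonempty ∧ t₁ ∩ t₂ = ∅ ∧ t₁ ∪ t₂ = s ∧
    ∀ x ∈ t₁, ∀ y ∈ t₂, G.Adj x y

/-- If `p` reaches `v` within `s`, then either `p = v` or `v` has a neighbour `p'`
reachable from `p` avoiding `v`. -/
lemma reach_split {V : Type*} {G : SimpleGraph V} {s : Set V} {v p : V}
    (h : ReachIn G s p v) :
    p = v ∨ ∃ p', p' ∈ s ∧ p' ≠ v ∧ G.Adj v p' ∧ ReachIn G (s \ {v}) p p' := by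
  induction h using Relation.ReflTransGen.head_induction_on with
  | refl => exact Or.inl rfl
  | @head a c hac hcv ih =>
    by_cases hav : a = v
    · exact Or.inl hav
    right
    by_cases hcveq : c = v
    · exact ⟨a, hac.1, hav, (hcveq ▸ hac.2.2).symm, Relation.ReflTransGen.refl⟩
    · rcases ih with rfl | ⟨c', hc's, hc'v, hadj, hreach⟩
      · exact absurd rfl hcveq
      · refine ⟨c', hc's, hc'v, hadj,
          Relation.ReflTransGen.head ⟨⟨hac.1, ?_⟩, ⟨hac.2.1, ?_⟩, hac.2.2⟩ hreach⟩
        · simpa using hav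
        · simpa using hcveq

/-- If `v` has neighbours `n₁, n₂` that are separated in `s \ {v}`, then `v` is adjacent to
everything reachable from `n₁` in `s \ {v}`. -/
lemma dom_of_sep {V : Type*} {G : SimpleGraph V} (h4 : P4Free G) {s : Set V} {v n₁ n₂ : V}
    (hn2 : n₂ ∈ s \ {v}) (h1 : G.Adj v n₁) (h2 : G.Adj v n₂)
    (hsep : ¬ReachIn G (s \ {v}) n₁ n₂) :
    ∀ a, ReachIn G (s \ {v}) n₁ a → G.Adj v a := by
  intro a ha
  induction ha with
  | refl => exact h1
  | @tail m a hr hedge ih =>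
    by_contra hva
    obtain ⟨hm, ha', hma⟩ := hedge
    have hman2 : ¬G.Adj a n₂ := fun hx => hsep ((hr.tail ⟨hm, ha', hma⟩).tail ⟨ha', hn2, hx⟩)
    have hmn2 : ¬G.Adj m n₂ := fun hx => hsep (hr.tail ⟨hm, hn2, hx⟩)
    have nan2 : a ≠ n₂ := fun e => hsep (e ▸ (hr.tail ⟨hm, ha', hma⟩))
    have nmn2 : m ≠ n₂ := fun e => hsep (e ▸ hr)
    have nav : a ≠ v := by simpa using ha'.2
    exact p4free_elim h4 hma.symm ih.symm h2 (fun hx => hva hx.symm) hman2 hmn2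
      nav nan2 nmn2

lemma key_lemma {V : Type} [DecidableEq V] (G : SimpleGraph V) (h4 : P4Free G) :
    ∀ n : ℕ, ∀ s : Finset V, s.card = n → 2 ≤ s.card →
      DiscOn G ↑s ∨ JoinOn G ↑s := by
  intro n
  induction n using Nat.strong_induction_on with
  | _ n IH =>
  intro s hcard hs2
  rcases eq_or_lt_of_le hs2 with h2 | h3
  · -- base case: exactly two vertices
    obtain ⟨x, y, hxy, rfl⟩ := Finset.card_eq_two.mp h2.symm
    have hco : (↑({x, y} : Finset V) : Set V) = {x} ∪ {y} := by
      rw [Finset.coe_insert, Finset.coe_singleton, Set.singleton_union]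
    by_cases hadj : G.Adj x y
    · right
      refine ⟨{x}, {y}, ⟨x, rfl⟩, ⟨y, rfl⟩, ?_, hco.symm, ?_⟩
      · rw [Set.singleton_inter_eq_empty]; simpa using hxy
      · rintro a rfl b rfl; exact hadj
    · left
      refine ⟨{x}, {y}, ⟨x, rfl⟩, ⟨y, rfl⟩, ?_, hco.symm, ?_⟩
      · rw [Set.singleton_inter_eq_empty]; simpa using hxy
      · rintro a rfl b rfl; exact hadj
  · -- inductive step: at least three vertices
    obtain ⟨v, hv⟩ : s.Nonempty := Finset.card_pos.mp (by omega)
    set s' := s.erase v with hs'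
    have hcard' : s'.card = n - 1 := by
      rw [hs', Finset.card_erase_of_mem hv, hcard]
    have hs'2 : 2 ≤ s'.card := by omega
    have hco : (↑s' : Set V) = ↑s \ {v} := by simp [hs']
    have hAsub : ∀ {A B : Set V}, A ∪ B = (↑s' : Set V) → ∀ x ∈ A, x ∈ (↑s : Set V) ∧ x ≠ v := by
      intro A B hun x hx
      have : x ∈ (↑s' : Set V) := hun ▸ Or.inl hx
      rw [hco] at this
      exact ⟨this.1, by simpa using this.2⟩
    have hBsub : ∀ {A B : Set V}, A ∪ B = (↑s' : Set V) → ∀ x ∈ B, x ∈ (↑s : Set V) ∧ x ≠ v := by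
      intro A B hun x hx
      have : x ∈ (↑s' : Set V) := hun ▸ Or.inr hx
      rw [hco] at this
      exact ⟨this.1, by simpa using this.2⟩
    have hvs : v ∈ (↑s : Set V) := hv
    -- second vertex besides v
    obtain ⟨w0, hw0s, hw0v⟩ := Finset.exists_mem_ne (s := s) (by omega) v
    rcases IH (n-1) (by omega) s' hcard' hs'2 with hD | hJ
    · -- G restricted to s \ {v} is disconnected
      by_cases hds : DiscOn G ↑s
      · exact Or.inl hds
      right
      -- s is "connected": total reachability
      have total : ∀ x ∈ (↑s : Set V), ∀ y ∈ (↑s : Set V), ReachIn G ↑s x y := by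
        intro x hx y hy
        by_contra hr
        refine hds ⟨{z | z ∈ (↑s : Set V) ∧ ReachIn G ↑s x z},
          {z | z ∈ (↑s : Set V) ∧ ¬ReachIn G ↑s x z},
          ⟨x, hx, Relation.ReflTransGen.refl⟩, ⟨y, hy, hr⟩, ?_, ?_, ?_⟩
        · apply Set.eq_empty_iff_forall_notMem.mpr
          rintro z ⟨⟨_, h1⟩, _, h2⟩
          exact h2 h1
        · ext z; simp only [Set.mem_union, Set.mem_setOf_eq]; constructor
          · rintro (⟨h, _⟩ | ⟨h, _⟩) <;> exact h
          · intro hz; by_cases hrz : ReachIn G ↑s x z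
            · exact Or.inl ⟨hz, hrz⟩
            · exact Or.inr ⟨hz, hrz⟩
        · rintro p ⟨hps, hpr⟩ q ⟨hqs, hqr⟩ hadj
          exact hqr (hpr.tail ⟨hps, hqs, hadj⟩)
      obtain ⟨A, B, ⟨p, hpA⟩, ⟨q, hqB⟩, hABd, hABu, hnoc⟩ := hD
      have hstay : ∀ {x y : V}, ReachIn G (↑s \ {v}) x y → x ∈ A → y ∈ A := by
        intro x y hxy hx
        refine reach_stay (A := A) (B := B) ?_ hnoc hxy hx
        intro z hz
        have : z ∈ A ∪ B := by rw [hABu, hco]; exact hz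
        exact this
      have hpq : ¬ReachIn G (↑s \ {v}) p q := by
        intro h
        have hqA := hstay h hpA
        have : q ∈ A ∩ B := ⟨hqA, hqB⟩
        rw [hABd] at this
        exact this
      obtain ⟨hps, hpv⟩ := hAsub hABu p hpA
      obtain ⟨hqs, hqv⟩ := hBsub hABu q hqB
      rcases reach_split (total p hps v hvs) with rfl | ⟨p', hp's, hp'v, hp'adj, hp'r⟩
      · exact absurd rfl hpv
      rcases reach_split (total q hqs v hvs) with rfl | ⟨q', hq's, hq'v, hq'adj, hq'r⟩
      · exact absurd rfl hqv
      have hp'q' : ¬ReachIn G (↑s \ {v}) p' q' := by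
        intro h
        exact hpq ((hp'r.trans' h).trans' hq'r.symm)
      have hq'mem : q' ∈ (↑s : Set V) \ {v} := ⟨hq's, by simpa using hq'v⟩
      have hp'mem : p' ∈ (↑s : Set V) \ {v} := ⟨hp's, by simpa using hp'v⟩
      have hdom : ∀ y ∈ (↑s : Set V) \ {v}, G.Adj v y := by
        intro y hy
        have hyv : y ≠ v := by simpa using hy.2
        rcases reach_split (total y hy.1 v hvs) with rfl | ⟨y', hy's, hy'v, hy'adj, hy'r⟩
        · exact absurd rfl hyv
        have hy'mem : y' ∈ (↑s : Set V) \ {v} := ⟨hy's, by simpa using hy'v⟩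
        by_cases hcase : ReachIn G (↑s \ {v}) y' p'
        · have hsep : ¬ReachIn G (↑s \ {v}) y' q' := fun h =>
            hp'q' (hcase.symm.trans' h)
          exact dom_of_sep h4 hq'mem hy'adj hq'adj hsep y hy'r.symm
        · exact dom_of_sep h4 hp'mem hy'adj hp'adj hcase y hy'r.symm
      refine ⟨{v}, ↑s \ {v}, ⟨v, rfl⟩, ⟨w0, by exact ⟨hw0s, by simpa using hw0v⟩⟩, ?_, ?_, ?_⟩
      · apply Set.eq_empty_iff_forall_notMem.mpr
        rintro z ⟨hz1, _, hzz⟩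
        exact hzz hz1
      · rw [Set.singleton_union, Set.insert_diff_singleton, Set.insert_eq_self.mpr hvs]
      · intro x hx y hy
        exact (Set.eq_of_mem_singleton hx).symm ▸ hdom y hy
    · -- G restricted to s \ {v} is a join over A, B
      obtain ⟨A, B, hAne, hBne, hABd, hABu, hcross⟩ := hJ
      have hunion : A ∪ B = (↑s : Set V) \ {v} := by rw [hABu, hco]
      have hvnAB : v ∉ A ∪ B := by rw [hunion]; exact fun h => h.2 rfl
      have huniv : ({v} : Set V) ∪ (A ∪ B) = ↑s := by
        rw [hunion, Set.singleton_union, Set.insert_diff_singleton, Set.insert_eq_self.mpr hvs]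
      by_cases hA1 : ∀ x ∈ A, G.Adj v x
      · right
        refine ⟨A, {v} ∪ B, hAne, ⟨v, Or.inl rfl⟩, ?_, ?_, ?_⟩
        · apply Set.eq_empty_iff_forall_notMem.mpr
          rintro z ⟨hzA, rfl | hzB⟩
          · exact hvnAB (Or.inl hzA)
          · have : z ∈ A ∩ B := ⟨hzA, hzB⟩
            rw [hABd] at this; exact this
        · rw [← huniv]; ext z; simp only [Set.mem_union, Set.mem_singleton_iff]; tauto
        · rintro x hx y (rfl | hy)
          · exact (hA1 x hx).symm
          · exact hcross x hx y hy
      · by_cases hB1 : ∀ x ∈ B, G.Adj v x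
        · right
          refine ⟨B, {v} ∪ A, hBne, ⟨v, Or.inl rfl⟩, ?_, ?_, ?_⟩
          · apply Set.eq_empty_iff_forall_notMem.mpr
            rintro z ⟨hzB, rfl | hzA⟩
            · exact hvnAB (Or.inr hzB)
            · have : z ∈ A ∩ B := ⟨hzA, hzB⟩
              rw [hABd] at this; exact this
          · rw [← huniv]; ext z; simp only [Set.mem_union, Set.mem_singleton_iff]; tauto
          · rintro x hx y (rfl | hy)
            · exact (hB1 x hx).symm
            · exact (hcross y hy x hx).symm
        · push_neg at hA1 hB1
          obtain ⟨a₀, ha₀A, ha₀⟩ := hA1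
          obtain ⟨b₀, hb₀B, hb₀⟩ := hB1
          by_cases hw : ∃ w ∈ A ∪ B, G.Adj v w
          · right
            obtain ⟨w, hwAB, hwadj⟩ := hw
            have c1 : ∀ w ∈ A, G.Adj v w → ∀ x ∈ A, ¬G.Adj v x → G.Adj w x := by
              intro w hwA hvw x hxA hvx
              by_contra hwx
              refine p4free_elim h4 hvw (hcross w hwA b₀ hb₀B) (hcross x hxA b₀ hb₀B).symm
                hb₀ hvx hwx ?_ ?_ ?_
              · exact fun e => (hBsub hABu b₀ hb₀B).2 e.symm
              · exact fun e => (hAsub hABu x hxA).2 e.symm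
              · exact fun e => hvx (e ▸ hvw)
            have c2 : ∀ w ∈ B, G.Adj v w → ∀ x ∈ B, ¬G.Adj v x → G.Adj w x := by
              intro w hwB hvw x hxB hvx
              by_contra hwx
              refine p4free_elim h4 hvw (hcross a₀ ha₀A w hwB).symm (hcross a₀ ha₀A x hxB)
                ha₀ hvx hwx ?_ ?_ ?_
              · exact fun e => (hAsub hABu a₀ ha₀A).2 e.symm
              · exact fun e => (hBsub hABu x hxB).2 e.symm
              · exact fun e => hvx (e ▸ hvw)
            refine ⟨{x | x ∈ A ∪ B ∧ G.Adj v x}, {v} ∪ {x | x ∈ A ∪ B ∧ ¬G.Adj v x},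
              ⟨w, hwAB, hwadj⟩, ⟨v, Or.inl rfl⟩, ?_, ?_, ?_⟩
            · apply Set.eq_empty_iff_forall_notMem.mpr
              rintro z ⟨⟨hzAB, hzadj⟩, rfl | ⟨_, hznadj⟩⟩
              · exact hvnAB hzAB
              · exact hznadj hzadj
            · rw [← huniv]; ext z
              simp only [Set.mem_union, Set.mem_setOf_eq, Set.mem_singleton_iff]
              by_cases hz : G.Adj v z <;> tauto
            · rintro x ⟨hxAB, hxadj⟩ y (rfl | ⟨hyAB, hynadj⟩)
              · exact hxadj.symm
              · rcases hxAB with hxA | hxB <;> rcases hyAB with hyA | hyB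
                · exact c1 x hxA hxadj y hyA hynadj
                · exact hcross x hxA y hyB
                · exact (hcross y hyA x hxB).symm
                · exact c2 x hxB hxadj y hyB hynadj
          · left
            push_neg at hw
            refine ⟨{v}, A ∪ B, ⟨v, rfl⟩, hAne.mono Set.subset_union_left, ?_, ?_, ?_⟩
            · apply Set.eq_empty_iff_forall_notMem.mpr
              rintro z ⟨rfl, hz⟩
              exact hvnAB hz
            · exact huniv
            · rintro x rfl y hy
              exact hw y hy


/-- A connected P₄-free graph with at least two vertices is a join: its vertex set splits
into two nonempty parts with all cross edges present. -/
theorem stmt6 {V : Type} [Fintype V] (G : SimpleGraph V) (hc : G.Connected)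
    (hnt : Nontrivial V) (h4 : P4Free G) :
    ∃ V₁ V₂ : Set V, V₁.Nonempty ∧ V₂.Nonempty ∧ V₁ ∩ V₂ = ∅ ∧ V₁ ∪ V₂ = Set.univ ∧
      ∀ x ∈ V₁, ∀ y ∈ V₂, G.Adj x y := by
  classical
  have hcard : 2 ≤ (Finset.univ : Finset V).card := by
    have := Fintype.one_lt_card (α := V); rw [Finset.card_univ]; omega
  rcases key_lemma G h4 (Finset.univ : Finset V).card Finset.univ rfl hcard with hD | hJ
  · exfalso
    obtain ⟨t₁, t₂, ⟨x, hx⟩, ⟨y, hy⟩, hd, hu, hnoc⟩ := hD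
    have hr := hc.preconnected x y
    rw [SimpleGraph.reachable_iff_reflTransGen] at hr
    have hstay : ∀ z, Relation.ReflTransGen G.Adj x z → z ∈ t₁ := by
      intro z hz
      induction hz with
      | refl => exact hx
      | @tail m z h' hadj ih =>
        have hz : z ∈ t₁ ∪ t₂ := by rw [hu]; simp
        rcases hz with h | h
        · exact h
        · exact absurd hadj (hnoc _ ih _ h)
    have hy1 : y ∈ t₁ := hstay y hr
    have : y ∈ t₁ ∩ t₂ := ⟨hy1, hy⟩
    rw [hd] at this
    exact this
  · obtain ⟨t₁, t₂, h1, h2, hd, hu, hcr⟩ := hJ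
    exact ⟨t₁, t₂, h1, h2, hd, by simpa using hu, hcr⟩
end

section
/- Let G be a connected P₄-free graph and let T be a minimum connected dominating set of G (a connected dominating set of smallest size). Then |T| ≤ 2; that is, G[T] is a single vertex or a single edge. -/
open SimpleGraph

lemma p4_embed {V : Type} (G : SimpleGraph V) (x0 x1 x2 x3 : V)
    (h01 : G.Adj x0 x1) (h12 : G.Adj x1 x2) (h23 : G.Adj x2 x3)
    (h02 : ¬G.Adj x0 x2) (h03 : ¬G.Adj x0 x3) (h13 : ¬G.Adj x1 x3)
    (n02 : x0 ≠ x2) (n03 : x0 ≠ x3) (n13 : x1 ≠ x3) :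
    Nonempty (SimpleGraph.pathGraph 4 ↪g G) := by
  have n01 := h01.ne
  have n12 := h12.ne
  have n23 := h23.ne
  refine ⟨⟨⟨![x0,x1,x2,x3], ?_⟩, ?_⟩⟩
  · intro i j hij
    fin_cases i <;> fin_cases j <;> simp_all [Matrix.cons_val_zero, Matrix.cons_val_one]
  · intro i j
    have h10 := h01.symm
    have h21 := h12.symm
    have h32 := h23.symm
    have h20 : ¬G.Adj x2 x0 := fun h => h02 h.symm
    have h30 : ¬G.Adj x3 x0 := fun h => h03 h.symm
    have h31 : ¬G.Adj x3 x1 := fun h => h13 h.symm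
    have l0 : ¬G.Adj x0 x0 := G.irrefl
    have l1 : ¬G.Adj x1 x1 := G.irrefl
    have l2 : ¬G.Adj x2 x2 := G.irrefl
    have l3 : ¬G.Adj x3 x3 := G.irrefl
    show G.Adj (![x0,x1,x2,x3] i) (![x0,x1,x2,x3] j) ↔ _
    fin_cases i <;> fin_cases j <;>
      simp [pathGraph_adj, h01, h12, h23, h02, h03, h13, h10, h21, h32, h20, h30,
        h31, l0, l1, l2, l3] <;> decide

lemma exists_dom_edge {V : Type} [Fintype V] (G : SimpleGraph V) (hc : G.Connected)
    (h4 : IsEmpty (SimpleGraph.pathGraph 4 ↪g G))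
    {e f : V} (hef : G.Adj e f) :
    ∃ a b, G.Adj a b ∧ ∀ u, u = a ∨ u = b ∨ G.Adj a u ∨ G.Adj b u := by
  classical
  set cn : V → Finset V := fun x => insert x (G.neighborFinset x) with hcn
  have hmem : ∀ x y, y ∈ cn x ↔ y = x ∨ G.Adj x y := by
    intro x y; simp [hcn, mem_neighborFinset]
  obtain ⟨p, hp, hmax⟩ := Finset.exists_max_image
    (Finset.univ.filter (fun p : V × V => G.Adj p.1 p.2))
    (fun p => (cn p.1 ∪ cn p.2).card)
    ⟨(e, f), by simp [hef]⟩
  obtain ⟨a, b⟩ := p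
  simp only [Finset.mem_filter] at hp
  have hab : G.Adj a b := hp.2
  have hmax' : ∀ x y, G.Adj x y → (cn x ∪ cn y).card ≤ (cn a ∪ cn b).card := by
    intro x y hxy; exact hmax (x, y) (by simp [hxy])
  refine ⟨a, b, hab, ?_⟩
  by_contra hcon
  push_neg at hcon
  obtain ⟨u0, hu0a, hu0b, hu0a', hu0b'⟩ := hcon
  have hSne : (Finset.univ.filter (fun u => u ∉ cn a ∪ cn b)).Nonempty := by
    refine ⟨u0, ?_⟩
    simp only [Finset.mem_filter, Finset.mem_union, hmem]
    push_neg
    exact ⟨Finset.mem_univ _, ⟨hu0a, hu0a'⟩, ⟨hu0b, hu0b'⟩⟩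
  obtain ⟨u, huS, humin⟩ := Finset.exists_min_image _ (fun u => G.dist u a) hSne
  simp only [Finset.mem_filter, Finset.mem_union, hmem] at huS
  push_neg at huS
  obtain ⟨-, ⟨hua, hau⟩, ⟨hub, hbu⟩⟩ := huS
  have hd0 : G.dist u a ≠ 0 := fun h => hua (hc.dist_eq_zero_iff.mp h)
  have hd1 : G.dist u a ≠ 1 := fun h => hau (dist_eq_one_iff_adj.mp h).symm
  have hd2 : 2 ≤ G.dist u a := by omega
  obtain ⟨pw, hpw⟩ := (hc u a).exists_walk_length_eq_dist
  cases pw with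
  | nil => simp [SimpleGraph.dist_self] at hd2
  | @cons _ w _ hu_w q =>
    simp only [Walk.length_cons] at hpw
    have hqle : G.dist w a ≤ q.length := dist_le q
    have huw1 : G.dist u w = 1 := dist_eq_one_iff_adj.mpr hu_w
    have htri : G.dist u a ≤ G.dist u w + G.dist w a := hc.dist_triangle
    by_cases hd3 : 3 ≤ G.dist u a
    · -- far case
      have hwa2 : 2 ≤ G.dist w a := by omega
      have hw_ne_a : w ≠ a := by
        intro h; subst h; simp [SimpleGraph.dist_self] at hwa2
      have hnwa : ¬G.Adj w a := by
        intro h; have := dist_eq_one_iff_adj.mpr h; omega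
      by_cases hwb : G.Adj b w
      · -- P4: u - w - b - a
        have hub' : ¬G.Adj u b := fun h => hbu h.symm
        have hua' : ¬G.Adj u a := fun h => hau h.symm
        obtain ⟨emb⟩ := p4_embed G u w b a hu_w hwb.symm hab.symm hub' hua' hnwa hub hua hw_ne_a
        exact h4.false emb
      · -- w is a closer non-dominated vertex
        have hw_ne_b : w ≠ b := by
          intro h; subst h; exact hnwa hab.symm
        have hwS : w ∈ Finset.univ.filter (fun u => u ∉ cn a ∪ cn b) := by
          simp only [Finset.mem_filter, Finset.mem_union, hmem]
          push_neg
          exact ⟨Finset.mem_univ _, ⟨hw_ne_a, fun h => hnwa h.symm⟩, ⟨hw_ne_b, hwb⟩⟩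
        have := humin w hwS
        omega
    · -- dist u a = 2
      have hd : G.dist u a = 2 := by omega
      have hw_ne_a : w ≠ a := by
        intro h; subst h; exact hau hu_w.symm
      have hwa : G.Adj w a := by
        rw [← dist_eq_one_iff_adj]
        have h0 : G.dist w a ≠ 0 := fun h => hw_ne_a (hc.dist_eq_zero_iff.mp h)
        omega
      have hw_ne_b : w ≠ b := by
        intro h; subst h; exact hbu hu_w.symm
      by_cases hwb : G.Adj w b
      · -- maximality violated by pair (a, w)
        have hsub : insert u (cn a ∪ cn b) ⊆ cn a ∪ cn w := by
          intro x hx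
          rcases Finset.mem_insert.mp hx with rfl | hx
          · exact Finset.mem_union_right _ ((hmem w x).mpr (Or.inr hu_w.symm))
          by_contra hx'
          simp only [Finset.mem_union, hmem] at hx hx'
          push_neg at hx'
          obtain ⟨⟨hxa, hax⟩, hxw, hwx⟩ := hx'
          rcases hx with (hx | hax') | hx
          · exact hxa hx
          · exact hax hax'
          have hbx : G.Adj b x := by
            rcases hx with rfl | h
            · exact absurd hwb hwx
            · exact h
          have hx_ne_u : x ≠ u := by
            rintro rfl; exact hbu hbx
          by_cases hxu : G.Adj x u
          · -- P4 : a - b - x - u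
            have h1 : ¬G.Adj a x := hax
            have h2 : ¬G.Adj a u := hau
            have h3 : ¬G.Adj b u := hbu
            obtain ⟨emb⟩ := p4_embed G a b x u hab hbx hxu h1 h2 h3
              (Ne.symm hxa) (Ne.symm hua) (Ne.symm hub)
            exact h4.false emb
          · -- P4 : u - w - b - x
            have h1 : ¬G.Adj u b := fun h => hbu h.symm
            have h2 : ¬G.Adj u x := fun h => hxu h.symm
            have h3 : ¬G.Adj w x := hwx
            obtain ⟨emb⟩ := p4_embed G u w b x hu_w hwb hbx h1 h2 h3
              hub (Ne.symm hx_ne_u) (Ne.symm hxw)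
            exact h4.false emb
        have hu_notmem : u ∉ cn a ∪ cn b := by
          simp only [Finset.mem_union, hmem]
          push_neg
          exact ⟨⟨hua, hau⟩, hub, hbu⟩
        have hcard1 : (cn a ∪ cn b).card + 1 ≤ (cn a ∪ cn w).card := by
          rw [← Finset.card_insert_of_notMem hu_notmem]
          exact Finset.card_le_card hsub
        have hcard2 : (cn a ∪ cn w).card ≤ (cn a ∪ cn b).card := hmax' a w hwa.symm
        omega
      · -- P4 : u - w - a - b
        have h1 : ¬G.Adj u a := fun h => hau h.symm
        have h2 : ¬G.Adj u b := fun h => hbu h.symm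
        have h3 : ¬G.Adj w b := hwb
        obtain ⟨emb⟩ := p4_embed G u w a b hu_w hwa hab h1 h2 h3 hua hub hw_ne_b
        exact h4.false emb

/-- A minimum connected dominating set of a connected P₄-free graph has at most two
vertices. -/
theorem stmt13 {V : Type} [Fintype V] (G : SimpleGraph V) (hc : G.Connected)
    (h4 : P4Free G) (T : Set V) (hT : IsMinConnDomSet G T) :
    T.ncard ≤ 2 := by
  classical
  have h4' : IsEmpty (SimpleGraph.pathGraph 4 ↪g G) := h4
  by_cases hedge : ∃ e f, G.Adj e f
  · obtain ⟨e, f, hef⟩ := hedge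
    obtain ⟨a, b, hab, hdom⟩ := exists_dom_edge G hc h4' hef
    have hmem_a : a ∈ ({a, b} : Set V) := by simp
    have hT' : IsConnDomSet G {a, b} := by
      refine ⟨⟨a, hmem_a⟩, ?_, ?_⟩
      · rw [connected_iff]
        refine ⟨?_, ⟨⟨a, hmem_a⟩⟩⟩
        have key : ∀ z (hz : z ∈ ({a, b} : Set V)),
            (G.induce {a, b}).Reachable ⟨z, hz⟩ ⟨a, hmem_a⟩ := by
          intro z hz
          rcases hz with rfl | hz
          · exact Reachable.refl _
          · rcases hz with rfl
            exact Adj.reachable (by simp [comap_adj, hab.symm])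
        rintro ⟨x, hx⟩ ⟨y, hy⟩
        exact (key x hx).trans (key y hy).symm
      · intro u hu
        simp only [Set.mem_insert_iff, Set.mem_singleton_iff] at hu
        push_neg at hu
        rcases hdom u with h | h | h | h
        · exact absurd h hu.1
        · exact absurd h hu.2
        · exact ⟨a, hmem_a, h.symm⟩
        · exact ⟨b, by simp, h.symm⟩
    calc T.ncard ≤ ({a, b} : Set V).ncard := hT.2 _ hT'
      _ ≤ 2 := by
        have := Set.ncard_insert_le a ({b} : Set V)
        simpa using this
  · push_neg at hedge
    obtain ⟨t, ht⟩ := hT.1.1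
    have hTsub : T ⊆ {t} := by
      intro x hx
      have : x = t := by
        rcases (hc x t) with ⟨w⟩
        cases w with
        | nil => rfl
        | cons h q => exact absurd h (hedge _ _)
      simp [this]
    calc T.ncard ≤ ({t} : Set V).ncard := Set.ncard_le_ncard hTsub (Set.finite_singleton t)
      _ ≤ 2 := by simp
end
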